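/- Let U be a δ-supercompactness measure for κ and let κ ≤ α < β < δ. Then U_β↓α = U_α, that is, {B↓α : B ∈ U_β} = {A↓α : A ∈ U}. -/
import Mathlib


noncomputable section

open Set

/-- `𝒫_κ(δ)`: the collection of subsets of the ordinals below `δ` of cardinality `< κ`. -/
abbrev Pk (κ δ : Ordinal) : Type 1 :=
  {P : Set Ordinal // P ⊆ Set.Iio δ ∧ Cardinal.mk ↥P < Cardinal.lift.{1,0} κ.card}

/-- Strong inclusion `P ⊏~ Q`: `P ⊊ Q` and `|P| < |Q ∩ κ|`. -/
def SInc (κ : Ordinal) (P Q : Set Ordinal) : Prop :=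
  P ⊂ Q ∧ Cardinal.mk ↥P < Cardinal.mk ↥(Q ∩ Set.Iio κ)

/-- A finite `⊏~`-increasing sequence of elements of `𝒫_κ(δ)`, coded as a list. -/
def IncList (κ δ : Ordinal) (s : List (Pk κ δ)) : Prop :=
  s.Chain' fun P Q => SInc κ P.1 Q.1

/-- `U` is a `δ`-supercompactness measure for `κ`: a proper ultrafilter on `𝒫_κ(δ)`
that is `κ`-complete, fine, and normal. -/
structure IsSCMeasure (κ δ : Ordinal) (U : Set (Set (Pk κ δ))) : Prop where
  proper : ∅ ∉ U
  upward : ∀ {A B : Set (Pk κ δ)}, A ∈ U → A ⊆ B → B ∈ U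
  ultra : ∀ A : Set (Pk κ δ), A ∈ U ∨ Aᶜ ∈ U
  complete : ∀ (ι : Type) (f : ι → Set (Pk κ δ)), Cardinal.mk ι < κ.card →
    (∀ i, f i ∈ U) → (⋂ i, f i) ∈ U
  fine : ∀ ξ < δ, {P : Pk κ δ | ξ ∈ P.1} ∈ U
  normal : ∀ A ∈ U, ∀ F : Pk κ δ → Ordinal, (∀ P ∈ A, F P ∈ P.1) →
    ∃ B ∈ U, ∃ c, ∀ P ∈ B, F P = c

/-- `P ↓ α = P ∩ α`. -/
def restrictP (κ δ α : Ordinal) (P : Pk κ δ) : Pk κ α :=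
  ⟨P.1 ∩ Set.Iio α, Set.inter_subset_right,
    lt_of_le_of_lt (Cardinal.mk_le_mk_of_subset Set.inter_subset_left) P.2.2⟩

/-- `A ↓ α = {P ∩ α : P ∈ A}`. -/
def projSet (κ δ α : Ordinal) (A : Set (Pk κ δ)) : Set (Pk κ α) :=
  restrictP κ δ α '' A

/-- `U_α = {A ↓ α : A ∈ U}`. -/
def Uproj (κ δ α : Ordinal) (U : Set (Set (Pk κ δ))) : Set (Set (Pk κ α)) :=
  projSet κ δ α '' U

/-- `p = (s, A)` is a condition of the supercompact Prikry forcing `ℙ_U`: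
`s` is a finite `⊏~`-increasing sequence (the stem), `A ∈ U` (the measure-one part),
and every member of `A` strongly includes the last entry of the stem. -/
def IsCond (κ δ : Ordinal) (U : Set (Set (Pk κ δ)))
    (p : List (Pk κ δ) × Set (Pk κ δ)) : Prop :=
  IncList κ δ p.1 ∧ p.2 ∈ U ∧
    ∀ hne : p.1 ≠ [], ∀ Q ∈ p.2, SInc κ (p.1.getLast hne).1 Q.1

/-- The order of the supercompact Prikry forcing: `p ≤ q` iff the stem of `q` is an
initial segment of the stem of `p`, the new stem entries lie in the measure-one part
of `q`, and the measure-one part of `p` is contained in that of `q`. -/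
def CondLe {X : Type*} (p q : List X × Set X) : Prop :=
  q.1 <+: p.1 ∧ (∀ x ∈ p.1.drop q.1.length, x ∈ q.2) ∧ p.2 ⊆ q.2

/-- Compatibility of two conditions of `ℙ_U`. -/
def Compat (κ δ : Ordinal) (U : Set (Set (Pk κ δ)))
    (p q : List (Pk κ δ) × Set (Pk κ δ)) : Prop :=
  ∃ r, IsCond κ δ U r ∧ CondLe r p ∧ CondLe r q

/-- `p ↓ α`. -/
def condProj (κ δ α : Ordinal) (p : List (Pk κ δ) × Set (Pk κ δ)) :
    List (Pk κ α) × Set (Pk κ α) :=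
  (p.1.map (restrictP κ δ α), projSet κ δ α p.2)

/-- `p = (s, A)` is `α`-nice: every finite `⊏~`-increasing sequence from `A ↓ α`
is of the form `r ↓ α` for some finite `⊏~`-increasing sequence `r` from `A`. -/
def IsNice (κ δ α : Ordinal) (p : List (Pk κ δ) × Set (Pk κ δ)) : Prop :=
  ∀ t : List (Pk κ α), IncList κ α t → (∀ x ∈ t, x ∈ projSet κ δ α p.2) →
    ∃ r : List (Pk κ δ), IncList κ δ r ∧ (∀ x ∈ r, x ∈ p.2) ∧
      r.map (restrictP κ δ α) = t

/-- The pointwise image `f '' P`, as an element of `𝒫_κ(δ)`. -/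
def mapP (κ δ : Ordinal) (f : Ordinal → Ordinal)
    (hf : Set.MapsTo f (Set.Iio δ) (Set.Iio δ)) (P : Pk κ δ) : Pk κ δ :=
  ⟨f '' P.1, fun x hx => by
      obtain ⟨y, hy, rfl⟩ := hx
      exact hf (P.2.1 hy),
    lt_of_le_of_lt Cardinal.mk_image_le P.2.2⟩

/-- The map `π_f` induced by `f` on conditions:
`π_f (s, A) = ((f''s(0), …, f''s(lh s − 1)), {f''P : P ∈ A})`. -/
def condMap (κ δ : Ordinal) (f : Ordinal → Ordinal)
    (hf : Set.MapsTo f (Set.Iio δ) (Set.Iio δ))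
    (p : List (Pk κ δ) × Set (Pk κ δ)) : List (Pk κ δ) × Set (Pk κ δ) :=
  (p.1.map (mapP κ δ f hf), mapP κ δ f hf '' p.2)

/-- A filter on the supercompact Prikry forcing `ℙ_U`: a nonempty, upward-closed,
downward-directed set of conditions. -/
def IsPFilter (κ δ : Ordinal) (U : Set (Set (Pk κ δ)))
    (g : Set (List (Pk κ δ) × Set (Pk κ δ))) : Prop :=
  (∀ p ∈ g, IsCond κ δ U p) ∧ g.Nonempty ∧
    (∀ p ∈ g, ∀ q, IsCond κ δ U q → CondLe p q → q ∈ g) ∧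
    (∀ p ∈ g, ∀ q ∈ g, ∃ r ∈ g, CondLe r p ∧ CondLe r q)

/-- The quotient forcing `Q_{αδ}(g) = {q ∈ ℙ^α_U : q ↓ α ∈ g}`. -/
def QSet (κ δ α : Ordinal) (U : Set (Set (Pk κ δ)))
    (g : Set (List (Pk κ α) × Set (Pk κ α))) :
    Set (List (Pk κ δ) × Set (Pk κ δ)) :=
  {q | IsCond κ δ U q ∧ IsNice κ δ α q ∧ condProj κ δ α q ∈ g}

/-- An `ω`-length `⊏~`-increasing sequence of elements of `𝒫_κ(δ)`. -/
def SeqInc (κ δ : Ordinal) (σ : ℕ → Pk κ δ) : Prop :=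
  ∀ n, SInc κ (σ n).1 (σ (n + 1)).1

/-- The filter `F_σ` generated by an infinite `⊏~`-increasing sequence `σ`:
all conditions `(t, A)` with `t = σ ↾ lh t` and `σ(i) ∈ A` for all `i ≥ lh t`. -/
def Fseq (κ δ : Ordinal) (U : Set (Set (Pk κ δ))) (σ : ℕ → Pk κ δ) :
    Set (List (Pk κ δ) × Set (Pk κ δ)) :=
  {p | IsCond κ δ U p ∧ p.1 = (List.range p.1.length).map σ ∧
    ∀ i, p.1.length ≤ i → σ i ∈ p.2}

/-- for `κ ≤ α < β < δ`, `U_β ↓ α = U_α`, i.e.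
`{B↓α : B ∈ U_β} = {A↓α : A ∈ U}`. -/
theorem Uproj_trans (κ δ : Ordinal)
    (hκreg : κ.card.IsRegular) (hκunc : Cardinal.aleph0 < κ.card)
    (hκcard : κ.card.ord = κ) (hδcard : δ.card.ord = δ) (hκδ : κ ≤ δ)
    (U : Set (Set (Pk κ δ))) (hU : IsSCMeasure κ δ U)
    (α β : Ordinal) (hκα : κ ≤ α) (hαβ : α < β) (hβδ : β < δ) :
    projSet κ β α '' Uproj κ δ β U = Uproj κ δ α U := by
  have hcomp : ∀ P : Pk κ δ, restrictP κ β α (restrictP κ δ β P) = restrictP κ δ α P := by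
    intro P
    apply Subtype.ext
    show (P.1 ∩ Set.Iio β) ∩ Set.Iio α = P.1 ∩ Set.Iio α
    rw [Set.inter_assoc, Set.Iio_inter_Iio, min_eq_right hαβ.le]
  have hproj : ∀ A : Set (Pk κ δ), projSet κ β α (projSet κ δ β A) = projSet κ δ α A := by
    intro A
    unfold projSet
    rw [Set.image_image]
    exact Set.image_congr fun P _ => hcomp P
  unfold Uproj
  rw [Set.image_image]
  exact Set.image_congr fun A _ => hproj A
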